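/- For a finite loop Q, P^2(Q) is contained in the derived subloop Q'. -/

import Mathlib

/-- A loop: a magma with two-sided identity in which all left and right
translations are bijections. -/
class Loop (Q : Type*) extends Mul Q, One Q where
  one_mul : ∀ a : Q, 1 * a = a
  mul_one : ∀ a : Q, a * 1 = a
  mulLeft_bijective : ∀ a : Q, Function.Bijective fun x : Q => a * x
  mulRight_bijective : ∀ a : Q, Function.Bijective fun x : Q => x * a

/-- `IsProdOf s x` means `x` can be written as a product, under some ordering
and association, whose multiset of factors is exactly `s`. -/
inductive IsProdOf {Q : Type*} [Mul Q] : Multiset Q → Q → Prop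
  | single (a : Q) : IsProdOf {a} a
  | mul {s t : Multiset Q} {a b : Q} :
      IsProdOf s a → IsProdOf t b → IsProdOf (s + t) (a * b)

/-- `fullProds Q k` is `P^k(Q)`: elements expressible as a product (in some
order and association) containing each element of `Q` exactly `k` times. -/
def fullProds (Q : Type*) [Mul Q] [Fintype Q] (k : ℕ) : Set Q :=
  {x | IsProdOf (k • (Finset.univ : Finset Q).val) x}

/-- The smallest congruence on `Q` whose quotient is a group; its class of `1`
is the associator subloop `A(Q)`, and its classes are the cosets of `A(Q)`. -/
def assocRel {Q : Type*} [Mul Q] (x y : Q) : Prop :=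
  ∀ r : Q → Q → Prop, Equivalence r →
    (∀ a b c d, r a b → r c d → r (a * c) (b * d)) →
    (∀ a b c, r ((a * b) * c) (a * (b * c))) →
    r x y

/-- The smallest congruence on `Q` whose quotient is an abelian group; its
class of `1` is the derived subloop `Q'`, and its classes are the cosets of `Q'`. -/
def commRel {Q : Type*} [Mul Q] (x y : Q) : Prop :=
  ∀ r : Q → Q → Prop, Equivalence r →
    (∀ a b c d, r a b → r c d → r (a * c) (b * d)) →
    (∀ a b c, r ((a * b) * c) (a * (b * c))) →
    (∀ a b, r (a * b) (b * a)) →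
    r x y


section Aux
variable {Q : Type*}

theorem commRel_equivalence [Mul Q] : Equivalence (commRel (Q := Q)) where
  refl x := fun r hE _ _ _ => hE.refl x
  symm h := fun r hE hc ha hm => hE.symm (h r hE hc ha hm)
  trans h1 h2 := fun r hE hc ha hm => hE.trans (h1 r hE hc ha hm) (h2 r hE hc ha hm)

def commSetoid (Q : Type*) [Mul Q] : Setoid Q := ⟨commRel, commRel_equivalence⟩

def Der (Q : Type*) [Mul Q] := Quotient (commSetoid Q)

variable [Loop Q]

instance : CommMonoid (Der Q) where
  mul := Quotient.map₂ (· * ·) (fun _ _ h1 _ _ h2 =>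
    fun r hE hc ha hm => hc _ _ _ _ (h1 r hE hc ha hm) (h2 r hE hc ha hm))
  one := Quotient.mk _ 1
  mul_assoc a b c := by
    induction a using Quotient.ind
    induction b using Quotient.ind
    induction c using Quotient.ind
    exact Quotient.sound (fun r hE hc ha hm => ha _ _ _)
  mul_comm a b := by
    induction a using Quotient.ind
    induction b using Quotient.ind
    exact Quotient.sound (fun r hE hc ha hm => hm _ _)
  one_mul a := by
    induction a using Quotient.ind
    exact congrArg (Quotient.mk _) (Loop.one_mul _)
  mul_one a := by
    induction a using Quotient.ind
    exact congrArg (Quotient.mk _) (Loop.mul_one _)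

noncomputable instance : CommGroup (Der Q) := commGroupOfIsUnit (by
  intro a
  induction a using Quotient.ind with
  | _ a =>
    obtain ⟨x, hx⟩ := (Loop.mulLeft_bijective a).surjective 1
    exact IsUnit.of_mul_eq_one (Quotient.mk _ x) (congrArg (Quotient.mk _) hx))

def qd : Q → Der Q := Quotient.mk _

theorem qd_mul (a b : Q) : qd (a * b) = qd a * qd b := rfl

end Aux

theorem fullProds_two_subset_derived (Q : Type*) [Loop Q] [Fintype Q] :
    ∀ x ∈ fullProds Q 2, commRel x 1 := by
  classical
  intro x hx
  have him : ∀ (s : Multiset Q) (y : Q), IsProdOf s y → qd y = (s.map qd).prod := by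
    intro s y h
    induction h with
    | single a => simp
    | mul h1 h2 ih1 ih2 => rw [Multiset.map_add, Multiset.prod_add, qd_mul, ih1, ih2]
  haveI : Finite (Der Q) := Quotient.finite _
  haveI : Fintype (Der Q) := Fintype.ofFinite _
  have hsurj : Function.Surjective (qd (Q := Q)) := Quotient.exists_rep
  have hcard : ∀ g h : Der Q,
      (Finset.univ.filter fun x : Q => qd x = g).card ≤
        (Finset.univ.filter fun x : Q => qd x = h).card := by
    intro g h
    obtain ⟨a, ha⟩ := hsurj (h * g⁻¹)
    apply Finset.card_le_card_of_injOn (fun x => a * x)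
    · intro y hy
      simp only [Finset.mem_coe, Finset.mem_filter, Finset.mem_univ, true_and] at hy ⊢
      rw [qd_mul, hy, ha, inv_mul_cancel_right]
    · exact fun y _ z _ hyz => (Loop.mulLeft_bijective a).injective hyz
  set n := (Finset.univ.filter fun x : Q => qd x = (1 : Der Q)).card with hn
  have key : ∏ y : Q, qd y = (∏ g : Der Q, g) ^ n := by
    rw [← Finset.prod_fiberwise Finset.univ qd (fun y => qd y), ← Finset.prod_pow]
    refine Finset.prod_congr rfl fun g _ => ?_
    rw [Finset.prod_congr rfl (fun y hy => (Finset.mem_filter.1 hy).2), Finset.prod_const]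
    congr 1
    exact le_antisymm (hcard g 1) (hcard 1 g)
  have hsq : (∏ g : Der Q, g) * ∏ g : Der Q, g = 1 := by
    have h1 : ∏ g : Der Q, g = ∏ g : Der Q, g⁻¹ :=
      Fintype.prod_equiv (Equiv.inv (Der Q)) _ _ fun g => (inv_inv g).symm
    nth_rewrite 2 [h1]
    rw [← Finset.prod_mul_distrib]
    simp
  have hq1 : qd x = qd 1 := by
    have h1 := him _ _ hx
    rw [two_nsmul, Multiset.map_add, Multiset.prod_add] at h1
    have h2 : (Multiset.map qd Finset.univ.val).prod = ∏ y : Q, qd y := rfl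
    rw [h2, key] at h1
    rw [h1, ← mul_pow, hsq, one_pow]
    rfl
  exact Quotient.exact hq1
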